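/- Let Q = {q_t^z} be a family of strictly positive one-point probability distributions on X indexed by t ∈ Λ and boundary conditions z ∈ X^{Λ\{t}} (Λ, X finite). Then Q satisfies the consistency conditions (2) if and only if the family Δ_t^z(x,u) := ln(q_t^z(x)/q_t^z(u)) is a one-point transition energy field, i.e., satisfies Δ_t^z(x,u) = Δ_t^z(x,α) + Δ_t^z(α,u) and Δ_t^{zy}(x,u) + Δ_s^{zu}(y,v) = Δ_s^{zx}(y,v) + Δ_t^{zv}(x,u) for all distinct t,s, all x,u,α,y,v ∈ X, z ∈ X^{Λ\{t,s}}. -/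
import Mathlib


def cat {Λ X : Type*} [DecidableEq Λ] (t : Λ) (x : X) (z : {s : Λ // s ≠ t} → X) : Λ → X :=
  fun s => if h : s = t then x else z ⟨s, h⟩

def catT {Λ X : Type*} [DecidableEq Λ] (t s : Λ) (y : X) (z : {r : Λ // r ≠ t ∧ r ≠ s} → X) :
    {r : Λ // r ≠ t} → X :=
  fun r => if h : r.1 = s then y else z ⟨r.1, r.2, h⟩

def catS {Λ X : Type*} [DecidableEq Λ] (t s : Λ) (x : X) (z : {r : Λ // r ≠ t ∧ r ≠ s} → X) :
    {r : Λ // r ≠ s} → X :=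
  fun r => if h : r.1 = t then x else z ⟨r.1, h, r.2⟩

private lemma log4_eq {a b c d a' b' c' d' : ℝ} (ha : 0 < a) (hb : 0 < b) (hc : 0 < c)
    (hd : 0 < d) (ha' : 0 < a') (hb' : 0 < b') (hc' : 0 < c') (hd' : 0 < d')
    (h : Real.log a + Real.log b + Real.log c + Real.log d
      = Real.log a' + Real.log b' + Real.log c' + Real.log d') :
    a * b * c * d = a' * b' * c' * d' := by
  have := congrArg Real.exp h
  simpa [Real.exp_add, Real.exp_log, ha, hb, hc, hd, ha', hb', hc', hd'] using this

theorem stmt10 {Λ X : Type*} [DecidableEq Λ] [Fintype Λ] [Fintype X]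
    (q : ∀ t : Λ, ({s : Λ // s ≠ t} → X) → X → ℝ)
    (hqpos : ∀ t z x, 0 < q t z x) (hqsum : ∀ t z, ∑ x : X, q t z x = 1)
    (Δ : ∀ t : Λ, ({s : Λ // s ≠ t} → X) → X → X → ℝ)
    (hΔ : ∀ t z x u, Δ t z x u = Real.log (q t z x / q t z u)) :
    (∀ t s : Λ, t ≠ s → ∀ x u y v : X, ∀ z : {r : Λ // r ≠ t ∧ r ≠ s} → X,
      q t (catT t s y z) x * q s (catS t s x z) v * q t (catT t s v z) u * q s (catS t s u z) y
        = q t (catT t s y z) u * q s (catS t s u z) v * q t (catT t s v z) x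
            * q s (catS t s x z) y)
    ↔
    ((∀ t : Λ, ∀ z : {s : Λ // s ≠ t} → X, ∀ x u α : X,
        Δ t z x u = Δ t z x α + Δ t z α u) ∧
     (∀ t s : Λ, t ≠ s → ∀ x u y v : X, ∀ z : {r : Λ // r ≠ t ∧ r ≠ s} → X,
        Δ t (catT t s y z) x u + Δ s (catS t s u z) y v
          = Δ s (catS t s x z) y v + Δ t (catT t s v z) x u)) := by
  have hlog : ∀ t z x u, Δ t z x u = Real.log (q t z x) - Real.log (q t z u) := by
    intro t z x u
    rw [hΔ, Real.log_div (hqpos t z x).ne' (hqpos t z u).ne']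
  constructor
  · intro h
    refine ⟨fun t z x u α => by simp [hlog], fun t s hts x u y v z => ?_⟩
    have h1 := h t s hts x u y v z
    have key := congrArg Real.log h1
    rw [Real.log_mul (mul_pos (mul_pos (hqpos _ _ _) (hqpos _ _ _)) (hqpos _ _ _)).ne' (hqpos _ _ _).ne',
      Real.log_mul (mul_pos (hqpos _ _ _) (hqpos _ _ _)).ne' (hqpos _ _ _).ne',
      Real.log_mul (hqpos _ _ _).ne' (hqpos _ _ _).ne',
      Real.log_mul (mul_pos (mul_pos (hqpos _ _ _) (hqpos _ _ _)) (hqpos _ _ _)).ne' (hqpos _ _ _).ne',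
      Real.log_mul (mul_pos (hqpos _ _ _) (hqpos _ _ _)).ne' (hqpos _ _ _).ne',
      Real.log_mul (hqpos _ _ _).ne' (hqpos _ _ _).ne'] at key
    simp only [hlog]
    linarith
  · rintro ⟨-, h2⟩ t s hts x u y v z
    have key := h2 t s hts x u y v z
    simp only [hlog] at key
    exact log4_eq (hqpos ..) (hqpos ..) (hqpos ..) (hqpos ..) (hqpos ..) (hqpos ..)
      (hqpos ..) (hqpos ..) (by linarith)
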